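/- Under gradient flow over the hierarchical tensor factorization objective, for any ν ∈ int(T), ν_c ∈ C(ν), r ∈ [R_ν], and t ≥ 0: d/dt ‖W^(ν)_{r,:}(t)‖² = 2·σ^(ν,r)(t)·⟨−∇L_H(W_H(t)), Ĉ^(ν,r)(t)⟩ = d/dt ‖W^(ν_c)_{:,r}(t)‖², where ⟨·,·⟩ is the Frobenius inner product. -/

import Mathlib

namespace HTF

/-- Rooted tree whose leaves are labeled by elements of `Fin N`. -/
inductive MTree (N : ℕ) : Type
  | leaf : Fin N → MTree N
  | node : List (MTree N) → MTree N

noncomputable instance {N : ℕ} : DecidableEq (MTree N) := fun _ _ => Classical.dec _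

namespace MTree

variable {N : ℕ}

/-- The list of leaf labels of the tree. -/
def leafList : MTree N → List (Fin N)
  | .leaf i => [i]
  | .node ts => ts.attach.flatMap fun t => t.1.leafList
decreasing_by simp only [MTree.node.sizeOf_spec]; have := List.sizeOf_lt_of_mem t.2; omega

/-- The label of a node: set of leaf indices appearing in its subtree. -/
def label (t : MTree N) : Finset (Fin N) := t.leafList.toFinset

/-- All nodes (subtrees) of the tree. -/
def nodes : MTree N → List (MTree N)
  | .leaf i => [.leaf i]
  | .node ts => .node ts :: ts.attach.flatMap fun t => t.1.nodes
decreasing_by simp only [MTree.node.sizeOf_spec]; have := List.sizeOf_lt_of_mem t.2; omega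

/-- The children of a node. -/
def children : MTree N → List (MTree N)
  | .leaf _ => []
  | .node ts => ts

/-- Interior (non-leaf) node. -/
def IsInterior : MTree N → Prop
  | .leaf _ => False
  | .node _ => True

/-- Every non-leaf node has at least one child. -/
def Branching : MTree N → Prop
  | .leaf _ => True
  | .node ts => ts ≠ [] ∧ ∀ t ∈ ts.attach, Branching t.1
decreasing_by simp only [MTree.node.sizeOf_spec]; have := List.sizeOf_lt_of_mem t.2; omega

/-- A valid mode tree over `[N]`: it has exactly `N` leaves, labeled `{1},...,{N}`
(each index appearing exactly once), and interior nodes have children. -/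
def Valid (t : MTree N) : Prop :=
  t.leafList.Nodup ∧ (∀ i : Fin N, i ∈ t.leafList) ∧ t.Branching

/-- The parent of node `ν` in the tree (first argument), if it exists. -/
noncomputable def parentIn : MTree N → MTree N → Option (MTree N)
  | .leaf _, _ => none
  | .node ts, ν =>
      if ν ∈ ts then some (.node ts)
      else ts.attach.findSome? fun t => parentIn t.1 ν
termination_by T _ => sizeOf T
decreasing_by simp only [MTree.node.sizeOf_spec]; have := List.sizeOf_lt_of_mem t.2; omega

end MTree

open MTree

variable {N : ℕ} (D : Fin N → ℕ)

/-- Full index set of an order-`N` tensor with mode dimensions `D`. -/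
abbrev Idx : Type := ∀ n, Fin (D n)

/-- The intermediate tensors `W^(ν,r)` of a hierarchical tensor factorization with
local-component numbers `R` and weight matrices `W` (columns indexed by `ℕ`).
An order-`|label ν|` tensor is represented as a function of a full index tuple that
only depends on the coordinates in `label ν`; with this representation, the tensor
product of tensors over disjoint mode sets is pointwise multiplication and the mode
permutation `π_ν` is the identity. -/
noncomputable def interm (R : MTree N → ℕ) (W : ∀ ν : MTree N, Fin (R ν) → ℕ → ℝ) :
    MTree N → ℕ → Idx D → ℝ
  | .leaf i, r => fun x =>
      if h : R (.leaf i) = D i then W (.leaf i) (Fin.cast h.symm (x i)) r else 0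
  | .node ts, r => fun x =>
      ∑ r' : Fin (R (.node ts)),
        W (.node ts) r' r * (ts.attach.map fun t => interm R W t.1 (r' : ℕ) x).prod
decreasing_by simp only [MTree.node.sizeOf_spec]; have := List.sizeOf_lt_of_mem t.2; omega

/-- The end tensor `W_H` of the hierarchical tensor factorization with mode tree `T`. -/
noncomputable def endT (R : MTree N → ℕ) (W : ∀ ν : MTree N, Fin (R ν) → ℕ → ℝ)
    (T : MTree N) : Idx D → ℝ :=
  interm D R W T 0

/-- Entry `(i, j)` of the weight matrix at node `ν` (zero outside the row range). -/
noncomputable def went (R : MTree N → ℕ) (W : ∀ ν : MTree N, Fin (R ν) → ℕ → ℝ)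
    (ν : MTree N) (i j : ℕ) : ℝ :=
  if h : i < R ν then W ν ⟨i, h⟩ j else 0

/-- `R_{Pa(ν)}` : the number of local components at the parent of `ν` in `T`
(`1` if `ν` is the root). -/
noncomputable def Rpar (R : MTree N → ℕ) (T ν : MTree N) : ℕ :=
  if ν = T then 1 else ((parentIn T ν).map R).getD 0

/-- Replace the weight matrix at node `μ` by `A`, keeping all other weight matrices. -/
noncomputable def replace (R : MTree N → ℕ) (W : ∀ ν : MTree N, Fin (R ν) → ℕ → ℝ)
    (μ : MTree N) (A : Fin (R μ) → ℕ → ℝ) : ∀ ν : MTree N, Fin (R ν) → ℕ → ℝ :=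
  fun ν => if h : ν = μ then fun i j => A (Fin.cast (congrArg R h) i) j else W ν

/-- Frobenius (Euclidean) inner product of order-`N` tensors. -/
noncomputable def tinner (A B : Idx D → ℝ) : ℝ := ∑ x, A x * B x

/-- Frobenius norm of an order-`N` tensor. -/
noncomputable def tnorm (A : Idx D → ℝ) : ℝ := Real.sqrt (∑ x, (A x) ^ 2)

/-- Frobenius norm of an order-`|s|` tensor represented as a function of a full index
tuple depending only on the coordinates in `s` (so that the sum over the full index
set over-counts each entry `∏_{n ∉ s} D n` times). -/
noncomputable def rnorm (s : Finset (Fin N)) (A : Idx D → ℝ) : ℝ :=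
  Real.sqrt ((∑ x, (A x) ^ 2) / ∏ n ∈ sᶜ, (D n : ℝ))

/-- Squared norm of the `r`'th column of the weight matrix at node `c`. -/
noncomputable def colSq (R : MTree N → ℕ) (W : ∀ ν : MTree N, Fin (R ν) → ℕ → ℝ)
    (c : MTree N) (r : ℕ) : ℝ :=
  ∑ i : Fin (R c), (W c i r) ^ 2

/-- Squared norm of the `r`'th row of the weight matrix at node `ν` of `T`. -/
noncomputable def rowSq (R : MTree N → ℕ) (W : ∀ ν : MTree N, Fin (R ν) → ℕ → ℝ)
    (T ν : MTree N) (r : ℕ) : ℝ :=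
  ∑ j : Fin (Rpar R T ν), (went R W ν r (j : ℕ)) ^ 2

/-- `σ^(ν,r)` : the norm of the `(ν,r)`'th local component, i.e. the product of the
norms of the vectors in `LC(ν,r)` (the `r`'th row of `W^(ν)` together with the `r`'th
columns of the weight matrices of the children of `ν`). -/
noncomputable def sigmaLoc (R : MTree N → ℕ) (W : ∀ ν : MTree N, Fin (R ν) → ℕ → ℝ)
    (T ν : MTree N) (r : ℕ) : ℝ :=
  Real.sqrt (rowSq R W T ν r) * (ν.children.map fun c => Real.sqrt (colSq R W c r)).prod

/-- `PadR_r(W^(ν)_{r,:})` : the matrix whose `r`'th row is the `r`'th row of `W^(ν)`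
and whose other rows are zero. -/
noncomputable def padRow (R : MTree N → ℕ) (W : ∀ ν : MTree N, Fin (R ν) → ℕ → ℝ)
    (ν : MTree N) (r : ℕ) : Fin (R ν) → ℕ → ℝ :=
  fun i j => if (i : ℕ) = r then W ν i j else 0

/-- `PadC_r(W^(c)_{:,r})` : the matrix whose `r`'th column is the `r`'th column of
`W^(c)` and whose other columns are zero. -/
noncomputable def padCol (R : MTree N → ℕ) (W : ∀ ν : MTree N, Fin (R ν) → ℕ → ℝ)
    (c : MTree N) (r : ℕ) : Fin (R c) → ℕ → ℝ :=
  fun i j => if j = r then W c i r else 0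

/-- `Ĉ^(ν,r)` : the end tensor obtained by normalizing the `r`'th local component at
`ν` and setting all other local components at `ν` to zero, i.e. the end tensor computed
with `W^(ν)` replaced by `σ^{-1} · PadR_r(W^(ν)_{r,:})` (and `0` if `σ^(ν,r) = 0`). -/
noncomputable def hatC (R : MTree N → ℕ) (W : ∀ ν : MTree N, Fin (R ν) → ℕ → ℝ)
    (T ν : MTree N) (r : ℕ) : Idx D → ℝ :=
  if sigmaLoc R W T ν r = 0 then 0
  else endT D R (replace R W ν fun i j =>
    if (i : ℕ) = r then (sigmaLoc R W T ν r)⁻¹ * W ν i j else 0) T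

/-- The objective `φ_H = L_H ∘ (end tensor)`. -/
noncomputable def obj (L : (Idx D → ℝ) → ℝ) (R : MTree N → ℕ) (T : MTree N)
    (W : ∀ ν : MTree N, Fin (R ν) → ℕ → ℝ) : ℝ :=
  L (endT D R W T)

/-- Update the single entry `(i, j)` of the weight matrix at node `μ` to the value `s`. -/
noncomputable def upd (R : MTree N → ℕ) (W : ∀ ν : MTree N, Fin (R ν) → ℕ → ℝ)
    (μ : MTree N) (i j : ℕ) (s : ℝ) : ∀ ν : MTree N, Fin (R ν) → ℕ → ℝ :=
  fun ν i' j' => if ν = μ ∧ (i' : ℕ) = i ∧ j' = j then s else W ν i' j'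

/-- `∂φ_H/∂W^(μ)_{i,j}` : the partial derivative of the objective with respect to the
`(i,j)` entry of the weight matrix at node `μ`, at the point `W`. -/
noncomputable def dObj (L : (Idx D → ℝ) → ℝ) (R : MTree N → ℕ) (T : MTree N)
    (W : ∀ ν : MTree N, Fin (R ν) → ℕ → ℝ) (μ : MTree N) (i j : ℕ) : ℝ :=
  deriv (fun s : ℝ => obj D L R T (upd R W μ i j s)) (went R W μ i j)

/-- `∇L(A)` : the gradient of a loss over tensors, entrywise. -/
noncomputable def tgrad (L : (Idx D → ℝ) → ℝ) (A : Idx D → ℝ) : Idx D → ℝ :=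
  fun x => deriv (fun s : ℝ => L (Function.update A x s)) (A x)

/-- Local smoothness of the loss: its gradient is Lipschitz on compact sets. -/
def LocSmooth (L : (Idx D → ℝ) → ℝ) : Prop :=
  ∀ K : Set (Idx D → ℝ), IsCompact K → ∃ β : NNReal, LipschitzOnWith β (tgrad D L) K

/-- Gradient flow over the objective: each entry of each weight matrix moves against
its partial derivative. -/
def GradFlow (L : (Idx D → ℝ) → ℝ) (R : MTree N → ℕ) (T : MTree N)
    (Wt : ℝ → ∀ ν : MTree N, Fin (R ν) → ℕ → ℝ) : Prop :=
  ∀ (ν : MTree N) (i : Fin (R ν)) (j : ℕ) (t : ℝ), 0 ≤ t →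
    HasDerivAt (fun s : ℝ => Wt s ν i j) (- dObj D L R T (Wt t) ν (i : ℕ) j) t

/-- The matricization of an order-`N` tensor according to the index set `I` : the
matrix whose rows are indexed by the modes in `I` and whose columns are indexed by the
remaining modes. -/
noncomputable def matricize (I : Finset (Fin N)) (A : Idx D → ℝ) :
    Matrix (∀ i : {n // n ∈ I}, Fin (D i)) (∀ j : {n // n ∉ I}, Fin (D j)) ℝ :=
  fun ρ κ => A fun n => if h : n ∈ I then ρ ⟨n, h⟩ else κ ⟨n, h⟩

/-- Frobenius norm of the weight matrix `W^(ν) ∈ ℝ^{R_ν × R_{Pa(ν)}}` at node `ν` of `T`. -/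
noncomputable def wFro (R : MTree N → ℕ) (W : ∀ ν : MTree N, Fin (R ν) → ℕ → ℝ)
    (T ν : MTree N) : ℝ :=
  Real.sqrt (∑ i : Fin (R ν), ∑ j : Fin (Rpar R T ν), (W ν i (j : ℕ)) ^ 2)

/-- The weights obtained by pruning the `(ν,r)`'th local component: the `r`'th row of
`W^(ν)` and the `r`'th column of `W^(c)` for every child `c` of `ν` are set to zero. -/
noncomputable def pruneLC (R : MTree N → ℕ) (W : ∀ ν : MTree N, Fin (R ν) → ℕ → ℝ)
    (ν : MTree N) (r : ℕ) : ∀ μ : MTree N, Fin (R μ) → ℕ → ℝ :=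
  fun μ i j =>
    if μ = ν ∧ (i : ℕ) = r then 0
    else if μ ∈ ν.children ∧ j = r then 0
    else W μ i j

end HTF

namespace HTF
namespace MTree
variable {N : ℕ}

theorem leafList_node (ts : List (MTree N)) :
    (node ts).leafList = ts.flatMap leafList := by
  rw [leafList]; simp [List.flatMap]

theorem nodes_node (ts : List (MTree N)) :
    (node ts).nodes = node ts :: ts.flatMap nodes := by
  rw [nodes]; simp [List.flatMap]

theorem branching_node {ts : List (MTree N)} :
    (node ts).Branching ↔ ts ≠ [] ∧ ∀ t ∈ ts, t.Branching := by
  rw [Branching]; simp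

theorem self_mem_nodes (t : MTree N) : t ∈ t.nodes := by
  cases t with
  | leaf i => rw [nodes]; exact List.mem_singleton.2 rfl
  | node ts => rw [nodes_node]; exact List.mem_cons_self

theorem mem_nodes_leaf {i : Fin N} {μ : MTree N} (h : μ ∈ (leaf i).nodes) : μ = leaf i := by
  rw [nodes] at h; simpa using h


theorem sizeOf_le_of_mem_nodes (t : MTree N) : ∀ {μ}, μ ∈ t.nodes → sizeOf μ ≤ sizeOf t := by
  intro μ h
  cases t with
  | leaf i => rw [mem_nodes_leaf h]
  | node ts =>
      rw [nodes_node] at h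
      rcases List.mem_cons.1 h with h | h
      · rw [h]
      · rcases List.mem_flatMap.1 h with ⟨t, ht, hμ⟩
        have := sizeOf_le_of_mem_nodes t hμ
        have h2 := List.sizeOf_lt_of_mem ht
        have h3 : sizeOf (node ts) = 1 + sizeOf ts := by simp
        omega
termination_by sizeOf t

theorem mem_nodes_of_child {ts : List (MTree N)} {t μ : MTree N} (ht : t ∈ ts)
    (h : μ ∈ t.nodes) : μ ∈ (node ts).nodes := by
  rw [nodes_node]; exact List.mem_cons_of_mem _ (List.mem_flatMap.2 ⟨t, ht, h⟩)

theorem nodes_trans (S : MTree N) : ∀ {ν μ : MTree N}, μ ∈ ν.nodes → ν ∈ S.nodes → μ ∈ S.nodes := by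
  intro ν μ hμ hν
  cases S with
  | leaf i => rw [mem_nodes_leaf hν] at hμ; exact hμ
  | node ts =>
      rw [nodes_node] at hν
      rcases List.mem_cons.1 hν with h | h
      · rw [← h]; exact hμ
      · rcases List.mem_flatMap.1 h with ⟨t, ht, hν'⟩
        exact mem_nodes_of_child ht (nodes_trans t hμ hν')
termination_by sizeOf S

theorem children_subset_nodes {t c : MTree N} (h : c ∈ t.children) : c ∈ t.nodes := by
  cases t with
  | leaf i => simp [children] at h
  | node ts => exact mem_nodes_of_child h (self_mem_nodes c)

theorem not_node_mem_child_nodes {ts : List (MTree N)} {t μ : MTree N} (ht : t ∈ ts)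
    (hμ : μ ∈ t.nodes) : node ts ∉ μ.nodes := by
  intro h
  have h1 := sizeOf_le_of_mem_nodes μ h
  have h2 := sizeOf_le_of_mem_nodes t hμ
  have h3 := List.sizeOf_lt_of_mem ht
  have : sizeOf (node ts) = 1 + sizeOf ts := by simp
  omega

theorem leafList_subset (t : MTree N) : ∀ {μ}, μ ∈ t.nodes → ∀ {ℓ}, ℓ ∈ μ.leafList → ℓ ∈ t.leafList := by
  intro μ hμ ℓ hℓ
  cases t with
  | leaf i => rwa [mem_nodes_leaf hμ] at hℓ
  | node ts =>
      rw [nodes_node] at hμ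
      rcases List.mem_cons.1 hμ with h | h
      · rwa [← h]
      · rcases List.mem_flatMap.1 h with ⟨t, ht, hμ'⟩
        rw [leafList_node]
        exact List.mem_flatMap.2 ⟨t, ht, leafList_subset t hμ' hℓ⟩
termination_by sizeOf t

theorem branching_of_mem_nodes (t : MTree N) : ∀ {μ}, t.Branching → μ ∈ t.nodes → μ.Branching := by
  intro μ hb hμ
  cases t with
  | leaf i => rw [mem_nodes_leaf hμ]; trivial
  | node ts =>
      rw [nodes_node] at hμ
      rcases List.mem_cons.1 hμ with h | h
      · subst h; exact hb
      · rcases List.mem_flatMap.1 h with ⟨t, ht, hμ'⟩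
        exact branching_of_mem_nodes t ((branching_node.1 hb).2 t ht) hμ'
termination_by sizeOf t

theorem leafList_ne_nil (t : MTree N) (hb : t.Branching) : t.leafList ≠ [] := by
  cases t with
  | leaf i => rw [leafList]; simp
  | node ts =>
      rw [leafList_node]
      rcases branching_node.1 hb with ⟨hne, hall⟩
      cases ts with
      | nil => exact absurd rfl hne
      | cons t' ts' =>
          have := leafList_ne_nil t' (hall t' (List.mem_cons_self (a := t') (l := ts')))
          simp only [List.flatMap_cons]
          intro h
          rcases List.append_eq_nil_iff.mp h with ⟨h1, _⟩
          exact this h1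
termination_by sizeOf t

theorem nodup_of_mem_nodes (t : MTree N) : ∀ {μ}, t.leafList.Nodup → μ ∈ t.nodes → μ.leafList.Nodup := by
  intro μ hnd hμ
  cases t with
  | leaf i => rwa [mem_nodes_leaf hμ]
  | node ts =>
      rw [nodes_node] at hμ
      rcases List.mem_cons.1 hμ with h | h
      · subst h; exact hnd
      · rcases List.mem_flatMap.1 h with ⟨t, ht, hμ'⟩
        apply nodup_of_mem_nodes t _ hμ'
        rw [leafList_node] at hnd
        rcases List.append_of_mem ht with ⟨l₁, l₂, rfl⟩
        rw [List.flatMap_append, List.flatMap_cons, List.nodup_append, List.nodup_append] at hnd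
        exact hnd.2.1.1
termination_by sizeOf t

/-- Positional disjointness: if `μ` lives in the subtree `t₀` of a node with duplicate-free
leaves, then `μ` is not a node of any sibling subtree. -/
theorem disj_of_split {ts l₁ l₂ : List (MTree N)} {t₀ μ : MTree N}
    (hnd : (node ts).leafList.Nodup) (hbr : (node ts).Branching)
    (hsplit : ts = l₁ ++ t₀ :: l₂) (hμ : μ ∈ t₀.nodes) :
    ∀ t, (t ∈ l₁ ∨ t ∈ l₂) → μ ∉ t.nodes := by
  intro t ht hmem
  have hbμ : μ.Branching :=
    branching_of_mem_nodes _ hbr (mem_nodes_of_child (by rw [hsplit]; simp) hμ)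
  rcases List.exists_mem_of_ne_nil _ (leafList_ne_nil μ hbμ) with ⟨ℓ, hℓ⟩
  have hℓ0 : ℓ ∈ t₀.leafList := leafList_subset t₀ hμ hℓ
  have hℓt : ℓ ∈ t.leafList := leafList_subset t hmem hℓ
  rw [leafList_node, hsplit, List.flatMap_append, List.flatMap_cons, List.nodup_append,
    List.nodup_append] at hnd
  rcases ht with ht | ht
  · exact hnd.2.2 _ (List.mem_flatMap.2 ⟨t, ht, hℓt⟩) _ (List.mem_append_left _ hℓ0) rfl
  · exact hnd.2.1.2.2 _ hℓ0 _ (List.mem_flatMap.2 ⟨t, ht, hℓt⟩) rfl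

/-- Value-level disjointness between distinct children. -/
theorem disj_of_ne {ts : List (MTree N)} {t t' μ : MTree N}
    (hnd : (node ts).leafList.Nodup) (hbr : (node ts).Branching)
    (ht : t ∈ ts) (ht' : t' ∈ ts) (hne : t ≠ t') (hμ : μ ∈ t.nodes) : μ ∉ t'.nodes := by
  rcases List.append_of_mem ht with ⟨l₁, l₂, hsplit⟩
  have ht'' : t' ∈ l₁ ∨ t' ∈ l₂ := by
    rw [hsplit] at ht'
    rcases List.mem_append.1 ht' with h | h
    · exact Or.inl h
    · rcases List.mem_cons.1 h with h | h
      · exact absurd h.symm hne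
      · exact Or.inr h
  exact disj_of_split hnd hbr hsplit hμ t' ht''

end MTree

open MTree

variable {N : ℕ} {D : Fin N → ℕ} {R : MTree N → ℕ}

theorem interm_leaf (W : ∀ ν : MTree N, Fin (R ν) → ℕ → ℝ) (i : Fin N) (r : ℕ) (x : Idx D) :
    interm D R W (leaf i) r x =
      if h : R (leaf i) = D i then W (leaf i) (Fin.cast h.symm (x i)) r else 0 := by
  rw [interm]

theorem interm_node (W : ∀ ν : MTree N, Fin (R ν) → ℕ → ℝ) (ts : List (MTree N)) (r : ℕ)
    (x : Idx D) :
    interm D R W (node ts) r x =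
      ∑ r' : Fin (R (node ts)), W (node ts) r' r *
        (ts.map fun t => interm D R W t (r' : ℕ) x).prod := by
  rw [interm]
  simp [List.attach_map_val]

theorem replace_self (W : ∀ ν : MTree N, Fin (R ν) → ℕ → ℝ) (μ : MTree N)
    (A : Fin (R μ) → ℕ → ℝ) : replace R W μ A μ = A := by
  funext i j
  simp [replace]

theorem replace_ne (W : ∀ ν : MTree N, Fin (R ν) → ℕ → ℝ) {μ ν : MTree N}
    (h : ν ≠ μ) (A : Fin (R μ) → ℕ → ℝ) : replace R W μ A ν = W ν := by
  simp only [replace, dif_neg h]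

theorem interm_congr (S : MTree N) (W₁ W₂ : ∀ ν : MTree N, Fin (R ν) → ℕ → ℝ)
    (h : ∀ μ ∈ S.nodes, W₁ μ = W₂ μ) (k : ℕ) (x : Idx D) :
    interm D R W₁ S k x = interm D R W₂ S k x := by
  cases S with
  | leaf i => rw [interm_leaf, interm_leaf, h _ (self_mem_nodes _)]
  | node ts =>
      rw [interm_node, interm_node, h _ (self_mem_nodes _)]
      congr 1
      funext r'
      congr 1
      apply congrArg
      apply List.map_congr_left
      intro t ht
      exact interm_congr t W₁ W₂ (fun μ hμ => h μ (mem_nodes_of_child ht hμ)) _ x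
termination_by sizeOf S

/-- The end tensor is linear in the weight matrix of any single node (for trees with
duplicate-free leaves). -/
theorem interm_replace_linear (S : MTree N) (W : ∀ ν : MTree N, Fin (R ν) → ℕ → ℝ)
    (hnd : S.leafList.Nodup) (hbr : S.Branching) {μ : MTree N} (hμ : μ ∈ S.nodes)
    {ι : Type} (F : Finset ι) (c : ι → ℝ) (A : ι → Fin (R μ) → ℕ → ℝ) (k : ℕ) (x : Idx D) :
    interm D R (replace R W μ (fun i j => ∑ m ∈ F, c m * A m i j)) S k x
      = ∑ m ∈ F, c m * interm D R (replace R W μ (A m)) S k x := by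
  cases S with
  | leaf ii =>
      have hμ' := mem_nodes_leaf hμ
      subst hμ'
      simp only [interm_leaf, replace_self]
      split_ifs with h
      · rfl
      · simp
  | node ts =>
      by_cases hroot : μ = node ts
      · subst hroot
        have haux : ∀ (B : Fin (R (node ts)) → ℕ → ℝ) (r' : ℕ) (t : MTree N), t ∈ ts →
            interm D R (replace R W (node ts) B) t r' x = interm D R W t r' x := by
          intro B r' t ht
          apply interm_congr
          intro ρ hρ
          apply replace_ne
          intro hρμ
          subst hρμ
          exact not_node_mem_child_nodes ht (self_mem_nodes t) hρ
        simp only [interm_node, replace_self]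
        have hrw : ∀ (B : Fin (R (node ts)) → ℕ → ℝ) (r' : Fin (R (node ts))),
            ((ts.map fun t => interm D R (replace R W (node ts) B) t (r' : ℕ) x)).prod
              = ((ts.map fun t => interm D R W t (r' : ℕ) x)).prod := by
          intro B r'
          exact congrArg List.prod (List.map_congr_left fun t ht => haux B _ t ht)
        simp only [hrw]
        simp only [Finset.sum_mul, Finset.mul_sum]
        rw [Finset.sum_comm]
        exact Finset.sum_congr rfl fun r' _ => Finset.sum_congr rfl fun m _ => by ring
      · -- μ lives in some child t₀
        have hμ' := hμ
        rw [nodes_node] at hμ'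
        rcases List.mem_cons.1 hμ' with h | h
        · exact absurd h hroot
        rcases List.mem_flatMap.1 h with ⟨t₀, ht₀, hμt₀⟩
        rcases List.append_of_mem ht₀ with ⟨l₁, l₂, hsplit⟩
        have hsib := disj_of_split hnd hbr hsplit hμt₀
        have hcongrW : ∀ (B : Fin (R μ) → ℕ → ℝ) (r' : ℕ) (t : MTree N),
            (t ∈ l₁ ∨ t ∈ l₂) →
            interm D R (replace R W μ B) t r' x = interm D R W t r' x := by
          intro B r' t ht
          apply interm_congr
          intro ρ hρ
          apply replace_ne
          intro hρμ
          subst hρμ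
          exact hsib t ht hρ
        have hprod : ∀ (B : Fin (R μ) → ℕ → ℝ) (r' : ℕ),
            ((ts.map fun t => interm D R (replace R W μ B) t r' x)).prod
              = ((l₁.map fun t => interm D R W t r' x)).prod *
                (interm D R (replace R W μ B) t₀ r' x *
                  ((l₂.map fun t => interm D R W t r' x)).prod) := by
          intro B r'
          rw [hsplit, List.map_append, List.prod_append, List.map_cons, List.prod_cons]
          congr 1
          · exact congrArg List.prod
              (List.map_congr_left fun t ht => hcongrW B r' t (Or.inl ht))
          · congr 1
            exact congrArg List.prod
              (List.map_congr_left fun t ht => hcongrW B r' t (Or.inr ht))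
        have hndt₀ : t₀.leafList.Nodup :=
          nodup_of_mem_nodes _ hnd (mem_nodes_of_child ht₀ (self_mem_nodes t₀))
        have hbrt₀ : t₀.Branching :=
          branching_of_mem_nodes _ hbr (mem_nodes_of_child ht₀ (self_mem_nodes t₀))
        have hIH : ∀ r' : ℕ,
            interm D R (replace R W μ (fun i j => ∑ m ∈ F, c m * A m i j)) t₀ r' x
              = ∑ m ∈ F, c m * interm D R (replace R W μ (A m)) t₀ r' x := by
          intro r'
          exact interm_replace_linear t₀ W hndt₀ hbrt₀ hμt₀ F c A r' x
        simp only [interm_node, replace_ne W (fun h => hroot h.symm), hprod, hIH]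
        simp only [Finset.sum_mul, Finset.mul_sum]
        rw [Finset.sum_comm]
        exact Finset.sum_congr rfl fun r' _ => Finset.sum_congr rfl fun m _ => by ring
termination_by sizeOf S

theorem interm_replace_smul (S : MTree N) (W : ∀ ν : MTree N, Fin (R ν) → ℕ → ℝ)
    (hnd : S.leafList.Nodup) (hbr : S.Branching) {μ : MTree N} (hμ : μ ∈ S.nodes)
    (cst : ℝ) (B : Fin (R μ) → ℕ → ℝ) (k : ℕ) (x : Idx D) :
    interm D R (replace R W μ (fun i j => cst * B i j)) S k x
      = cst * interm D R (replace R W μ B) S k x := by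
  simpa using interm_replace_linear S W hnd hbr hμ (Finset.univ : Finset Unit)
    (fun _ => cst) (fun _ => B) k x

theorem interm_replace_zero (S : MTree N) (W : ∀ ν : MTree N, Fin (R ν) → ℕ → ℝ)
    (hnd : S.leafList.Nodup) (hbr : S.Branching) {μ : MTree N} (hμ : μ ∈ S.nodes)
    (k : ℕ) (x : Idx D) :
    interm D R (replace R W μ (fun _ _ => (0 : ℝ))) S k x = 0 := by
  have h := interm_replace_smul S W hnd hbr hμ 0 (fun _ _ => (0 : ℝ)) k x
  simpa using h

/-- At the node itself, the end tensor only uses column `k` of the replaced matrix. -/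
theorem interm_replace_col (μ : MTree N) (W : ∀ ν : MTree N, Fin (R ν) → ℕ → ℝ)
    (A A' : Fin (R μ) → ℕ → ℝ) (k : ℕ) (x : Idx D) (h : ∀ i, A i k = A' i k) :
    interm D R (replace R W μ A) μ k x = interm D R (replace R W μ A') μ k x := by
  cases μ with
  | leaf i =>
      simp only [interm_leaf, replace_self]
      split_ifs with hh
      · exact h _
      · rfl
  | node ts =>
      simp only [interm_node, replace_self]
      apply Finset.sum_congr rfl
      intro r' _
      rw [h r']
      congr 1
      have haux : ∀ (B : Fin (R (node ts)) → ℕ → ℝ) (t : MTree N), t ∈ ts →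
          interm D R (replace R W (node ts) B) t (r' : ℕ) x = interm D R W t (r' : ℕ) x := by
        intro B t ht
        apply interm_congr
        intro ρ hρ
        apply replace_ne
        intro hρμ
        subst hρμ
        exact not_node_mem_child_nodes ht (self_mem_nodes t) hρ
      rw [congrArg List.prod (List.map_congr_left fun t ht => haux A t ht),
        congrArg List.prod (List.map_congr_left fun t ht => haux A' t ht)]

theorem node_ne_of_mem {us : List (MTree N)} {ν : MTree N} (hν : ν ∈ us) : node us ≠ ν := by
  intro h
  subst h
  have h1 := List.sizeOf_lt_of_mem hν
  have h2 : sizeOf (node us) = 1 + sizeOf us := by simp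
  omega

/-- Lifting pointwise equality at a subtree to the whole tree. -/
theorem interm_lift (S : MTree N) (hnd : S.leafList.Nodup) (hbr : S.Branching)
    {ν : MTree N} (hν : ν ∈ S.nodes) (W₁ W₂ : ∀ ν : MTree N, Fin (R ν) → ℕ → ℝ)
    (hout : ∀ μ ∈ S.nodes, μ ∉ ν.nodes → W₁ μ = W₂ μ)
    (hin : ∀ (k : ℕ) (x : Idx D), interm D R W₁ ν k x = interm D R W₂ ν k x) :
    ∀ (k : ℕ) (x : Idx D), interm D R W₁ S k x = interm D R W₂ S k x := by
  intro k x
  by_cases hroot : ν = S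
  · subst hroot; exact hin k x
  cases S with
  | leaf i => exact absurd (mem_nodes_leaf hν) hroot
  | node ts =>
      have hν' := hν
      rw [nodes_node] at hν'
      rcases List.mem_cons.1 hν' with h | h
      · exact absurd h hroot
      rcases List.mem_flatMap.1 h with ⟨t₀, ht₀, hνt₀⟩
      have hSW : W₁ (node ts) = W₂ (node ts) :=
        hout _ (self_mem_nodes _) (not_node_mem_child_nodes ht₀ hνt₀)
      rw [interm_node, interm_node, hSW]
      apply Finset.sum_congr rfl
      intro r' _
      congr 1
      apply congrArg
      apply List.map_congr_left
      intro t ht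
      by_cases hνt : ν ∈ t.nodes
      · exact interm_lift t
          (nodup_of_mem_nodes _ hnd (mem_nodes_of_child ht (self_mem_nodes t)))
          (branching_of_mem_nodes _ hbr (mem_nodes_of_child ht (self_mem_nodes t)))
          hνt W₁ W₂ (fun μ hμ hh => hout μ (mem_nodes_of_child ht hμ) hh) hin _ x
      · apply interm_congr
        intro μ hμ
        apply hout μ (mem_nodes_of_child ht hμ)
        intro hμν
        by_cases hte : t = t₀
        · exact hνt (hte ▸ hνt₀)
        · exact disj_of_ne hnd hbr ht₀ ht (fun hh => hte hh.symm) (nodes_trans t₀ hμν hνt₀) hμ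
termination_by sizeOf S

/-- At the parent, the end tensor only uses columns `< R (parent)` of a child's matrix. -/
theorem interm_parent_cols (us : List (MTree N)) (hnd : (node us).leafList.Nodup)
    (hbr : (node us).Branching) {ν : MTree N} (hν : ν ∈ us)
    (W : ∀ ν : MTree N, Fin (R ν) → ℕ → ℝ) (A A' : Fin (R ν) → ℕ → ℝ)
    (h : ∀ (i : Fin (R ν)) (j : ℕ), j < R (node us) → A i j = A' i j) :
    ∀ (k : ℕ) (x : Idx D),
      interm D R (replace R W ν A) (node us) k x
        = interm D R (replace R W ν A') (node us) k x := by
  intro k x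
  have hne : node us ≠ ν := node_ne_of_mem hν
  rw [interm_node, interm_node, replace_ne _ hne, replace_ne _ hne]
  apply Finset.sum_congr rfl
  intro r' _
  congr 1
  apply congrArg
  apply List.map_congr_left
  intro t ht
  by_cases hteq : t = ν
  · subst hteq
    exact interm_replace_col t W A A' (r' : ℕ) x (fun i => h i _ r'.isLt)
  · have hdisj : ν ∉ t.nodes :=
      disj_of_ne hnd hbr hν ht (fun hh => hteq hh.symm) (self_mem_nodes ν)
    have haux : ∀ (B : Fin (R ν) → ℕ → ℝ),
        interm D R (replace R W ν B) t (r' : ℕ) x = interm D R W t (r' : ℕ) x := by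
      intro B
      apply interm_congr
      intro ρ hρ
      apply replace_ne
      intro hρν
      subst hρν
      exact hdisj hρ
    rw [haux A, haux A']

/-- Replacing a node's matrix by its `rr`'th-column padding zeroes the tensor unless the
incoming column index is `rr`. -/
theorem interm_padCol (c : MTree N) (W : ∀ ν : MTree N, Fin (R ν) → ℕ → ℝ) (rr : ℕ)
    (k : ℕ) (x : Idx D) :
    interm D R (replace R W c (padCol R W c rr)) c k x
      = if k = rr then interm D R W c k x else 0 := by
  cases c with
  | leaf i =>
      simp only [interm_leaf, replace_self, padCol]
      by_cases hk : k = rr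
      · subst hk; simp
      · simp [hk]
  | node us =>
      have haux : ∀ (B : Fin (R (node us)) → ℕ → ℝ) (r' : ℕ) (t : MTree N), t ∈ us →
          interm D R (replace R W (node us) B) t r' x = interm D R W t r' x := by
        intro B r' t ht
        apply interm_congr
        intro ρ hρ
        apply replace_ne
        intro hρμ
        subst hρμ
        exact not_node_mem_child_nodes ht (self_mem_nodes t) hρ
      simp only [interm_node, replace_self, padCol]
      by_cases hk : k = rr
      · subst hk
        rw [if_pos rfl]
        apply Finset.sum_congr rfl
        intro r' _
        rw [if_pos rfl]
        congr 1
        exact congrArg List.prod (List.map_congr_left fun t ht => haux _ _ t ht)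
      · simp [hk]

/-- Keeping only the `rr`'th row at an interior node gives the same end tensor as keeping
only the `rr`'th column at any one of its children. -/
theorem prune_row_col (T : MTree N) (hnd : T.leafList.Nodup) (hbr : T.Branching)
    {ts : List (MTree N)} (hν : node ts ∈ T.nodes) {c : MTree N} (hc : c ∈ ts)
    (W : ∀ ν : MTree N, Fin (R ν) → ℕ → ℝ) (rr : ℕ) :
    ∀ (k : ℕ) (x : Idx D),
      interm D R (replace R W (node ts) (padRow R W (node ts) rr)) T k x
        = interm D R (replace R W c (padCol R W c rr)) T k x := by
  have hcn : c ∈ (node ts).nodes := mem_nodes_of_child hc (self_mem_nodes c)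
  apply interm_lift T hnd hbr hν
  · intro μ hμ hnot
    rw [replace_ne _ (fun h : μ = node ts => hnot (by rw [h]; exact self_mem_nodes _)),
      replace_ne _ (fun h : μ = c => hnot (by rw [h]; exact hcn))]
  · intro k x
    have hndν : (node ts).leafList.Nodup := nodup_of_mem_nodes _ hnd hν
    have hbrν : (node ts).Branching := branching_of_mem_nodes _ hbr hν
    -- decompose the children list at `c`
    rcases List.append_of_mem hc with ⟨l₁, l₂, hsplit⟩
    have hsib := disj_of_split hndν hbrν hsplit (self_mem_nodes c)
    have hauxν : ∀ (B : Fin (R (node ts)) → ℕ → ℝ) (r' : ℕ) (t : MTree N), t ∈ ts →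
        interm D R (replace R W (node ts) B) t r' x = interm D R W t r' x := by
      intro B r' t ht
      apply interm_congr
      intro ρ hρ
      apply replace_ne
      intro hρμ
      subst hρμ
      exact not_node_mem_child_nodes ht (self_mem_nodes t) hρ
    have hauxc : ∀ (r' : ℕ) (t : MTree N), (t ∈ l₁ ∨ t ∈ l₂) →
        interm D R (replace R W c (padCol R W c rr)) t r' x = interm D R W t r' x := by
      intro r' t ht
      apply interm_congr
      intro ρ hρ
      apply replace_ne
      intro hρc
      subst hρc
      exact hsib t ht hρ
    have hgen : ∀ (W' : ∀ ν : MTree N, Fin (R ν) → ℕ → ℝ) (rn : ℕ),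
        ((ts.map fun t => interm D R W' t rn x)).prod
          = ((l₁.map fun t => interm D R W' t rn x)).prod *
            (interm D R W' c rn x * ((l₂.map fun t => interm D R W' t rn x)).prod) := by
      intro W' rn
      rw [hsplit, List.map_append, List.prod_append, List.map_cons, List.prod_cons]
    rw [interm_node, interm_node, replace_self, replace_ne _ (node_ne_of_mem hc)]
    apply Finset.sum_congr rfl
    intro r' _
    rw [congrArg List.prod (List.map_congr_left fun t ht => hauxν (padRow R W (node ts) rr) _ t ht)]
    rw [hgen (replace R W c (padCol R W c rr)) (r' : ℕ), hgen W (r' : ℕ)]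
    rw [congrArg List.prod (List.map_congr_left fun t ht => hauxc (r' : ℕ) t (Or.inl ht)),
      congrArg List.prod (List.map_congr_left fun t ht => hauxc (r' : ℕ) t (Or.inr ht)),
      interm_padCol]
    rw [padRow]
    by_cases hrr : (r' : ℕ) = rr
    · rw [if_pos hrr, if_pos hrr]
    · rw [if_neg hrr, if_neg hrr]
      ring

theorem findSome?_attach {α β : Type*} (l : List α) (f : α → Option β) :
    (l.attach.findSome? fun t => f t.1) = l.findSome? f := by
  induction l with
  | nil => rfl
  | cons a l ih =>
      rw [List.attach_cons, List.findSome?_cons, List.findSome?_cons]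
      cases f a with
      | some b => rfl
      | none =>
          rw [List.findSome?_map]
          simpa [Function.comp] using ih

theorem parentIn_node (ts : List (MTree N)) (ν : MTree N) :
    parentIn (node ts) ν
      = if ν ∈ ts then some (node ts) else ts.findSome? fun t => parentIn t ν := by
  rw [parentIn]
  split_ifs with h
  · rfl
  · exact findSome?_attach ts (fun t => parentIn t ν)

theorem parentIn_eq_none (t : MTree N) {ν : MTree N} (h : ν ∉ t.nodes) :
    parentIn t ν = none := by
  cases t with
  | leaf i => rw [parentIn]
  | node ts =>
      rw [parentIn_node,
        if_neg (fun hm : ν ∈ ts => h (mem_nodes_of_child hm (self_mem_nodes ν)))]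
      rw [List.findSome?_eq_none_iff]
      intro t ht
      exact parentIn_eq_none t fun hm => h (mem_nodes_of_child ht hm)
termination_by sizeOf t

theorem parent_exists (T : MTree N) (hnd : T.leafList.Nodup) (hbr : T.Branching)
    {ν : MTree N} (hν : ν ∈ T.nodes) (hne : ν ≠ T) :
    ∃ p, parentIn T ν = some p ∧ p ∈ T.nodes ∧ ν ∈ p.children := by
  cases T with
  | leaf i => exact absurd (mem_nodes_leaf hν) hne
  | node ts =>
      rw [parentIn_node]
      by_cases hmem : ν ∈ ts
      · exact ⟨node ts, by rw [if_pos hmem], self_mem_nodes _, hmem⟩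
      · rw [if_neg hmem]
        have hν' := hν
        rw [nodes_node] at hν'
        rcases List.mem_cons.1 hν' with h | h
        · exact absurd h hne
        rcases List.mem_flatMap.1 h with ⟨t₀, ht₀, hνt₀⟩
        have hνne : ν ≠ t₀ := fun h => hmem (h ▸ ht₀)
        obtain ⟨p, hp, hpn, hpc⟩ := parent_exists t₀
          (nodup_of_mem_nodes _ hnd (mem_nodes_of_child ht₀ (self_mem_nodes t₀)))
          (branching_of_mem_nodes _ hbr (mem_nodes_of_child ht₀ (self_mem_nodes t₀)))
          hνt₀ hνne
        rcases List.append_of_mem ht₀ with ⟨l₁, l₂, hsplit⟩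
        have hsib := disj_of_split hnd hbr hsplit hνt₀
        refine ⟨p, ?_, mem_nodes_of_child ht₀ hpn, hpc⟩
        rw [hsplit, List.findSome?_append, List.findSome?_cons, hp]
        have h1 : (l₁.findSome? fun t => parentIn t ν) = none := by
          rw [List.findSome?_eq_none_iff]
          intro t ht
          exact parentIn_eq_none t (hsib t (Or.inl ht) ·)
        rw [h1]
        rfl
termination_by sizeOf T

theorem Rpar_eq {T ν p : MTree N} (hne : ν ≠ T) (hp : parentIn T ν = some p) :
    Rpar R T ν = R p := by
  rw [Rpar, if_neg hne, hp]
  rfl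

theorem went_val (W : ∀ ν : MTree N, Fin (R ν) → ℕ → ℝ) (ν : MTree N) (i : Fin (R ν)) (j : ℕ) :
    went R W ν (i : ℕ) j = W ν i j := by
  rw [went, dif_pos i.isLt]

theorem endT_eq (W : ∀ ν : MTree N, Fin (R ν) → ℕ → ℝ) (T : MTree N) :
    endT D R W T = interm D R W T 0 := rfl

/-- The single-entry indicator matrix at node `μ`. -/
noncomputable def unitMat (R : MTree N → ℕ) (μ : MTree N) (i j : ℕ) : Fin (R μ) → ℕ → ℝ :=
  fun i' j' => if (i' : ℕ) = i ∧ j' = j then 1 else 0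

/-- The matrix obtained from `W^(μ)` by zeroing the `(i,j)` entry. -/
noncomputable def offMat (R : MTree N → ℕ) (W : ∀ ν : MTree N, Fin (R ν) → ℕ → ℝ)
    (μ : MTree N) (i j : ℕ) : Fin (R μ) → ℕ → ℝ :=
  fun i' j' => if (i' : ℕ) = i ∧ j' = j then 0 else W μ i' j'

theorem upd_eq_replace (W : ∀ ν : MTree N, Fin (R ν) → ℕ → ℝ) (μ : MTree N) (i j : ℕ)
    (s : ℝ) :
    upd R W μ i j s
      = replace R W μ (fun i' j' => if (i' : ℕ) = i ∧ j' = j then s else W μ i' j') := by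
  funext ν i' j'
  by_cases h : ν = μ
  · subst h
    simp only [upd, replace, dif_pos rfl]
    simp
  · simp [upd, replace, h]

theorem upd_self (W : ∀ ν : MTree N, Fin (R ν) → ℕ → ℝ) (μ : MTree N) (i : Fin (R μ))
    (j : ℕ) : upd R W μ (i : ℕ) j (W μ i j) = W := by
  funext ν i' j'
  rw [upd]
  split_ifs with h
  · rcases h with ⟨h1, h2, h3⟩
    subst h1; subst h3
    have : i' = i := Fin.ext h2
    subst this
    rfl
  · rfl

theorem tgrad_eq (L : (Idx D → ℝ) → ℝ) (hL : Differentiable ℝ L) (A : Idx D → ℝ)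
    (x : Idx D) : tgrad D L A x = fderiv ℝ L A (Pi.single x 1) := by
  have hupd : ∀ s : ℝ, Function.update A x s
      = A + (s - A x) • (Pi.single x 1 : Idx D → ℝ) := by
    intro s
    funext y
    by_cases h : y = x
    · subst h; simp
    · simp [Function.update_of_ne h, Pi.single_apply, h]
  have hinner : HasDerivAt (fun s : ℝ => A + (s - A x) • (Pi.single x 1 : Idx D → ℝ))
      (Pi.single x 1) (A x) := by
    have h1 : HasDerivAt (fun s : ℝ => s - A x) 1 (A x) := (hasDerivAt_id _).sub_const _
    have h2 := (h1.smul_const (Pi.single x 1 : Idx D → ℝ)).const_add A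
    simpa using h2
  have hA : A + ((A x) - A x) • (Pi.single x 1 : Idx D → ℝ) = A := by simp
  have hfd := (hL A).hasFDerivAt
  rw [← hA] at hfd
  have hcomp := hfd.comp_hasDerivAt (A x) hinner
  rw [tgrad]
  simp only [hupd]
  have : (fun s : ℝ => L (A + (s - A x) • (Pi.single x 1 : Idx D → ℝ)))
      = L ∘ (fun s : ℝ => A + (s - A x) • (Pi.single x 1 : Idx D → ℝ)) := rfl
  rw [this]
  rw [hcomp.deriv]
  rw [hA]

theorem fderiv_apply_eq (L : (Idx D → ℝ) → ℝ) (hL : Differentiable ℝ L) (A v : Idx D → ℝ) :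
    fderiv ℝ L A v = ∑ x, v x * tgrad D L A x := by
  conv_lhs => rw [← Finset.univ_sum_single v]
  rw [map_sum]
  apply Finset.sum_congr rfl
  intro x _
  rw [tgrad_eq L hL A x]
  have h1 : Pi.single x (v x) = (v x) • (Pi.single x (1 : ℝ) : Idx D → ℝ) := by
    funext y
    by_cases h : y = x
    · subst h; simp
    · simp [Pi.single_apply, h]
  rw [h1, map_smul, smul_eq_mul]

theorem endT_upd_affine (W : ∀ ν : MTree N, Fin (R ν) → ℕ → ℝ) (T : MTree N)
    (hnd : T.leafList.Nodup) (hbr : T.Branching) {μ : MTree N} (hμ : μ ∈ T.nodes)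
    (i j : ℕ) (s : ℝ) :
    endT D R (upd R W μ i j s) T
      = endT D R (replace R W μ (offMat R W μ i j)) T
        + s • endT D R (replace R W μ (unitMat R μ i j)) T := by
  funext x
  rw [upd_eq_replace]
  have hM : (fun (i' : Fin (R μ)) (j' : ℕ) => if (i' : ℕ) = i ∧ j' = j then s else W μ i' j')
      = fun i' j' => ∑ m : Fin 2,
          ![(1 : ℝ), s] m * ![offMat R W μ i j, unitMat R μ i j] m i' j' := by
    funext i' j'
    rw [Fin.sum_univ_two]
    simp only [Matrix.cons_val_zero, Matrix.cons_val_one, Matrix.head_cons, offMat, unitMat]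
    split_ifs with h <;> ring
  rw [hM]
  have h := interm_replace_linear T W hnd hbr hμ (Finset.univ : Finset (Fin 2))
    ![(1 : ℝ), s] ![offMat R W μ i j, unitMat R μ i j] 0 x
  simp only [endT_eq]
  rw [h, Fin.sum_univ_two]
  simp only [Matrix.cons_val_zero, Matrix.cons_val_one, Matrix.head_cons, Pi.add_apply,
    Pi.smul_apply, smul_eq_mul]
  ring

theorem dObj_eq (L : (Idx D → ℝ) → ℝ) (hL : Differentiable ℝ L)
    (W : ∀ ν : MTree N, Fin (R ν) → ℕ → ℝ) (T : MTree N)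
    (hnd : T.leafList.Nodup) (hbr : T.Branching) {μ : MTree N} (hμ : μ ∈ T.nodes)
    (i : Fin (R μ)) (j : ℕ) :
    dObj D L R T W μ (i : ℕ) j
      = ∑ x, tgrad D L (endT D R W T) x
          * endT D R (replace R W μ (unitMat R μ (i : ℕ) j)) T x := by
  set a := endT D R (replace R W μ (offMat R W μ (i : ℕ) j)) T with ha
  set b := endT D R (replace R W μ (unitMat R μ (i : ℕ) j)) T with hb
  have key : ∀ s : ℝ, obj D L R T (upd R W μ (i : ℕ) j s) = L (a + s • b) := by
    intro s
    rw [obj, endT_upd_affine W T hnd hbr hμ]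
  have hfun : (fun s : ℝ => obj D L R T (upd R W μ (i : ℕ) j s)) = fun s => L (a + s • b) :=
    funext key
  have hpt : a + (W μ i j) • b = endT D R W T := by
    rw [← endT_upd_affine W T hnd hbr hμ (i : ℕ) j (W μ i j), upd_self]
  have hinner : HasDerivAt (fun s : ℝ => a + s • b) b (W μ i j) := by
    have h2 := ((hasDerivAt_id (W μ i j)).smul_const b).const_add a
    simpa using h2
  have hfd := (hL (endT D R W T)).hasFDerivAt
  rw [← hpt] at hfd
  have hcomp := hfd.comp_hasDerivAt (W μ i j) hinner
  rw [dObj, went_val, hfun]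
  have hco : (fun s : ℝ => L (a + s • b)) = L ∘ fun s : ℝ => a + s • b := rfl
  rw [hco, hcomp.deriv, hpt, fderiv_apply_eq L hL]
  exact Finset.sum_congr rfl fun x _ => mul_comm _ _

theorem children_node (ts : List (MTree N)) : (node ts).children = ts := rfl

/-- The end tensor only depends on a node's matrix through its first `R_{Pa(ν)}` columns. -/
theorem endT_replace_cols (T : MTree N) (hnd : T.leafList.Nodup) (hbr : T.Branching)
    {ν : MTree N} (hν : ν ∈ T.nodes) (W : ∀ ν : MTree N, Fin (R ν) → ℕ → ℝ)
    (A A' : Fin (R ν) → ℕ → ℝ)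
    (h : ∀ (i : Fin (R ν)) (j : ℕ), j < Rpar R T ν → A i j = A' i j) (x : Idx D) :
    endT D R (replace R W ν A) T x = endT D R (replace R W ν A') T x := by
  by_cases hroot : ν = T
  · subst hroot
    rw [endT_eq, endT_eq]
    apply interm_replace_col
    intro i
    apply h i 0
    rw [Rpar, if_pos rfl]
    exact Nat.zero_lt_one
  · obtain ⟨p, hp, hpn, hpc⟩ := parent_exists T hnd hbr hν hroot
    have hRp : Rpar R T ν = R p := Rpar_eq hroot hp
    rw [hRp] at h
    cases p with
    | leaf i => simp [children] at hpc
    | node us =>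
        rw [children_node] at hpc
        rw [endT_eq, endT_eq]
        refine interm_lift T hnd hbr hpn _ _ ?_ ?_ 0 x
        · intro μ hμ hnot
          have hne : μ ≠ ν := fun hh => hnot (by
            rw [hh]; exact mem_nodes_of_child hpc (self_mem_nodes ν))
          rw [replace_ne _ hne, replace_ne _ hne]
        · intro k y
          exact interm_parent_cols us (nodup_of_mem_nodes _ hnd hpn)
            (branching_of_mem_nodes _ hbr hpn) hpc W A A' h k y

theorem sum_sq_eq_zero {n : ℕ} {f : Fin n → ℝ} (h : Real.sqrt (∑ i, f i ^ 2) = 0) :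
    ∀ i, f i = 0 := by
  intro i
  have h1 : (∑ i, f i ^ 2) = 0 := by
    have h2 := Real.sqrt_eq_zero'.1 h
    have h3 : 0 ≤ ∑ i, f i ^ 2 := Finset.sum_nonneg fun i _ => sq_nonneg _
    linarith
  have h4 := (Finset.sum_eq_zero_iff_of_nonneg fun i _ => sq_nonneg (f i)).1 h1 i
    (Finset.mem_univ i)
  exact pow_eq_zero_iff (by norm_num) |>.1 h4

/-- The end tensor of the padded row equals `σ^(ν,r) Ĉ^(ν,r)`. -/
theorem padRow_endT (T : MTree N) (hnd : T.leafList.Nodup) (hbr : T.Branching)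
    {ts : List (MTree N)} (hν : node ts ∈ T.nodes)
    (W : ∀ ν : MTree N, Fin (R ν) → ℕ → ℝ) (rr : ℕ) (x : Idx D) :
    endT D R (replace R W (node ts) (padRow R W (node ts) rr)) T x
      = sigmaLoc R W T (node ts) rr * hatC D R W T (node ts) rr x := by
  by_cases hσ : sigmaLoc R W T (node ts) rr = 0
  · rw [hatC, if_pos hσ, hσ]
    simp only [Pi.zero_apply, zero_mul]
    rcases mul_eq_zero.1 hσ with h | h
    · -- the row is zero on the used columns
      have hrow : ∀ (i : Fin (R (node ts))) (j : ℕ), j < Rpar R T (node ts) →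
          padRow R W (node ts) rr i j = (fun (_ : Fin (R (node ts))) (_ : ℕ) => (0:ℝ)) i j := by
        intro i j hj
        rw [padRow]
        split_ifs with hi
        · have hw := sum_sq_eq_zero h ⟨j, hj⟩
          rw [← hi, went_val] at hw
          exact hw
        · rfl
      rw [endT_replace_cols T hnd hbr hν W _ _ hrow, endT_eq,
        interm_replace_zero T W hnd hbr hν]
    · -- some child's column is zero
      rw [children_node] at h
      rcases List.prod_eq_zero_iff.1 h with h0
      rcases List.mem_map.1 h0 with ⟨c, hc, hc0⟩
      have hcol : ∀ i : Fin (R c), W c i rr = 0 := by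
        rw [colSq] at hc0
        exact sum_sq_eq_zero hc0
      have hpad : padCol R W c rr = fun (_ : Fin (R c)) (_ : ℕ) => (0:ℝ) := by
        funext i j
        rw [padCol]
        split_ifs with hj
        · exact hcol i
        · rfl
      rw [endT_eq, prune_row_col T hnd hbr hν hc W rr 0 x, hpad,
        interm_replace_zero T W hnd hbr (nodes_trans T (mem_nodes_of_child hc (self_mem_nodes c)) hν)]
  · rw [hatC, if_neg hσ]
    have hmat : (fun (i : Fin (R (node ts))) (j : ℕ) =>
          if (i : ℕ) = rr then (sigmaLoc R W T (node ts) rr)⁻¹ * W (node ts) i j else 0)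
        = fun i j => (sigmaLoc R W T (node ts) rr)⁻¹ * padRow R W (node ts) rr i j := by
      funext i j
      rw [padRow]
      split_ifs with hi
      · rfl
      · rw [mul_zero]
    rw [hmat, endT_eq, endT_eq, interm_replace_smul T W hnd hbr hν]
    rw [← mul_assoc, mul_inv_cancel₀ hσ, one_mul]

theorem row_main (L : (Idx D → ℝ) → ℝ) (hL : Differentiable ℝ L) (T : MTree N)
    (hnd : T.leafList.Nodup) (hbr : T.Branching) {ts : List (MTree N)}
    (hν : node ts ∈ T.nodes) (W : ∀ ν : MTree N, Fin (R ν) → ℕ → ℝ)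
    (r : Fin (R (node ts))) :
    ∑ j : Fin (Rpar R T (node ts)),
        W (node ts) r (j : ℕ) * dObj D L R T W (node ts) (r : ℕ) (j : ℕ)
      = sigmaLoc R W T (node ts) (r : ℕ) *
          ∑ x, tgrad D L (endT D R W T) x * hatC D R W T (node ts) (r : ℕ) x := by
  have hdo : ∀ j : Fin (Rpar R T (node ts)),
      dObj D L R T W (node ts) (r : ℕ) (j : ℕ)
        = ∑ x, tgrad D L (endT D R W T) x
            * endT D R (replace R W (node ts) (unitMat R (node ts) (r : ℕ) (j : ℕ))) T x :=
    fun j => dObj_eq L hL W T hnd hbr hν r (j : ℕ)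
  simp only [hdo]
  conv_lhs => simp only [Finset.mul_sum]
  rw [Finset.sum_comm, Finset.mul_sum]
  apply Finset.sum_congr rfl
  intro x _
  -- collapse the sum over columns into a single padded-row end tensor
  have hlin := interm_replace_linear T W hnd hbr hν
    (Finset.univ : Finset (Fin (Rpar R T (node ts))))
    (fun j => W (node ts) r (j : ℕ))
    (fun j => unitMat R (node ts) (r : ℕ) (j : ℕ)) 0 x
  have hagree : ∀ (i' : Fin (R (node ts))) (j' : ℕ), j' < Rpar R T (node ts) →
      (fun i' j' => ∑ j : Fin (Rpar R T (node ts)),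
          W (node ts) r (j : ℕ) * unitMat R (node ts) (r : ℕ) (j : ℕ) i' j') i' j'
        = padRow R W (node ts) (r : ℕ) i' j' := by
    intro i' j' hj'
    simp only [unitMat, padRow]
    by_cases hi : (i' : ℕ) = (r : ℕ)
    · rw [if_pos hi]
      have hterm : ∀ j : Fin (Rpar R T (node ts)),
          W (node ts) r (j : ℕ) * (if (i' : ℕ) = (r : ℕ) ∧ j' = (j : ℕ) then (1:ℝ) else 0)
            = if j = ⟨j', hj'⟩ then W (node ts) r j' else 0 := by
        intro j
        by_cases hj : j = ⟨j', hj'⟩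
        · subst hj
          rw [if_pos rfl, if_pos ⟨hi, rfl⟩, mul_one]
        · rw [if_neg hj, if_neg, mul_zero]
          rintro ⟨-, h2⟩
          exact hj (Fin.ext h2.symm)
      rw [Finset.sum_congr rfl fun j _ => hterm j, Finset.sum_ite_eq' Finset.univ]
      rw [if_pos (Finset.mem_univ _)]
      have : i' = r := Fin.ext hi
      rw [this]
    · rw [if_neg hi]
      apply Finset.sum_eq_zero
      intro j _
      rw [if_neg (fun hh => hi hh.1), mul_zero]
  have hcols := endT_replace_cols T hnd hbr hν W _ _ hagree x
  have hpad := padRow_endT T hnd hbr hν W (r : ℕ) x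
  calc ∑ j : Fin (Rpar R T (node ts)), W (node ts) r (j : ℕ) *
          (tgrad D L (endT D R W T) x
            * endT D R (replace R W (node ts) (unitMat R (node ts) (r : ℕ) (j : ℕ))) T x)
      = tgrad D L (endT D R W T) x * ∑ j : Fin (Rpar R T (node ts)),
          W (node ts) r (j : ℕ)
            * endT D R (replace R W (node ts) (unitMat R (node ts) (r : ℕ) (j : ℕ))) T x := by
        rw [Finset.mul_sum]
        exact Finset.sum_congr rfl fun j _ => by ring
    _ = tgrad D L (endT D R W T) x *
          (sigmaLoc R W T (node ts) (r : ℕ) * hatC D R W T (node ts) (r : ℕ) x) := by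
        rw [← hpad, ← hcols]
        congr 1
        simp only [endT_eq]
        exact hlin.symm
    _ = sigmaLoc R W T (node ts) (r : ℕ) *
          (tgrad D L (endT D R W T) x * hatC D R W T (node ts) (r : ℕ) x) := by ring

theorem col_main (L : (Idx D → ℝ) → ℝ) (hL : Differentiable ℝ L) (T : MTree N)
    (hnd : T.leafList.Nodup) (hbr : T.Branching) {ts : List (MTree N)}
    (hν : node ts ∈ T.nodes) {c : MTree N} (hc : c ∈ ts)
    (W : ∀ ν : MTree N, Fin (R ν) → ℕ → ℝ) (rr : ℕ) :
    ∑ i : Fin (R c), W c i rr * dObj D L R T W c (i : ℕ) rr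
      = sigmaLoc R W T (node ts) rr *
          ∑ x, tgrad D L (endT D R W T) x * hatC D R W T (node ts) rr x := by
  have hcT : c ∈ T.nodes := nodes_trans T (mem_nodes_of_child hc (self_mem_nodes c)) hν
  have hdo : ∀ i : Fin (R c),
      dObj D L R T W c (i : ℕ) rr
        = ∑ x, tgrad D L (endT D R W T) x
            * endT D R (replace R W c (unitMat R c (i : ℕ) rr)) T x :=
    fun i => dObj_eq L hL W T hnd hbr hcT i rr
  simp only [hdo]
  conv_lhs => simp only [Finset.mul_sum]
  rw [Finset.sum_comm, Finset.mul_sum]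
  apply Finset.sum_congr rfl
  intro x _
  have hlin := interm_replace_linear T W hnd hbr hcT
    (Finset.univ : Finset (Fin (R c))) (fun i => W c i rr) (fun i => unitMat R c (i : ℕ) rr) 0 x
  have hB : (fun (i' : Fin (R c)) (j' : ℕ) =>
        ∑ i : Fin (R c), W c i rr * unitMat R c (i : ℕ) rr i' j')
      = padCol R W c rr := by
    funext i' j'
    simp only [unitMat, padCol]
    by_cases hj : j' = rr
    · rw [if_pos hj]
      have hterm : ∀ i : Fin (R c),
          W c i rr * (if (i' : ℕ) = (i : ℕ) ∧ j' = rr then (1:ℝ) else 0)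
            = if i = i' then W c i' rr else 0 := by
        intro i
        by_cases hi : i = i'
        · subst hi
          rw [if_pos rfl, if_pos ⟨rfl, hj⟩, mul_one]
        · rw [if_neg hi, if_neg, mul_zero]
          rintro ⟨h1, -⟩
          exact hi (Fin.ext h1.symm)
      rw [Finset.sum_congr rfl fun i _ => hterm i, Finset.sum_ite_eq' Finset.univ]
      rw [if_pos (Finset.mem_univ _)]
    · rw [if_neg hj]
      apply Finset.sum_eq_zero
      intro i _
      rw [if_neg (fun hh => hj hh.2), mul_zero]
  have hprc := prune_row_col T hnd hbr hν hc W rr 0 x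
  have hpad := padRow_endT T hnd hbr hν W rr x
  calc ∑ i : Fin (R c), W c i rr *
          (tgrad D L (endT D R W T) x * endT D R (replace R W c (unitMat R c (i : ℕ) rr)) T x)
      = tgrad D L (endT D R W T) x *
          ∑ i : Fin (R c), W c i rr * endT D R (replace R W c (unitMat R c (i : ℕ) rr)) T x := by
        rw [Finset.mul_sum]
        exact Finset.sum_congr rfl fun i _ => by ring
    _ = tgrad D L (endT D R W T) x *
          (sigmaLoc R W T (node ts) rr * hatC D R W T (node ts) rr x) := by
        rw [← hpad]
        congr 1
        simp only [endT_eq]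
        rw [hprc, ← hB]
        exact hlin.symm
    _ = sigmaLoc R W T (node ts) rr *
          (tgrad D L (endT D R W T) x * hatC D R W T (node ts) rr x) := by ring

end HTF
open HTF HTF.MTree in
/-- under gradient flow, for any interior node `ν`, child `c` of `ν`,
`r ∈ [R_ν]`, and time `t ≥ 0`, the squared norms of the `r`'th row of `W^(ν)(t)` and of
the `r`'th column of `W^(c)(t)` both evolve with derivative
`2 σ^(ν,r)(t) ⟨-∇L_H(W_H(t)), Ĉ^(ν,r)(t)⟩`. -/
theorem statement8 {N : ℕ} (D : Fin N → ℕ) (L : (Idx D → ℝ) → ℝ)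
    (hL : Differentiable ℝ L) (hLs : LocSmooth D L) (hL0 : ∀ A, 0 ≤ L A)
    (T : MTree N) (hT : T.Valid)
    (R : MTree N → ℕ) (hR : ∀ i : Fin N, R (MTree.leaf i) = D i)
    (Wt : ℝ → ∀ ν : MTree N, Fin (R ν) → ℕ → ℝ)
    (hflow : GradFlow D L R T Wt)
    (ν : MTree N) (hν : ν ∈ T.nodes) (hint : ν.IsInterior)
    (c : MTree N) (hc : c ∈ ν.children) (r : Fin (R ν))
    (t : ℝ) (ht : 0 ≤ t) :
    HasDerivAt (fun s : ℝ => rowSq R (Wt s) T ν (r : ℕ))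
      (2 * sigmaLoc R (Wt t) T ν (r : ℕ) *
        tinner D (fun x => - tgrad D L (endT D R (Wt t) T) x) (hatC D R (Wt t) T ν (r : ℕ))) t ∧
    HasDerivAt (fun s : ℝ => colSq R (Wt s) c (r : ℕ))
      (2 * sigmaLoc R (Wt t) T ν (r : ℕ) *
        tinner D (fun x => - tgrad D L (endT D R (Wt t) T) x) (hatC D R (Wt t) T ν (r : ℕ))) t := by
  obtain ⟨hnd, -, hbr⟩ := hT
  cases ν with
  | leaf i => exact absurd hint (by simp [MTree.IsInterior])
  | node ts =>
      rw [children_node] at hc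
      constructor
      · -- row part
        have hfun : (fun s : ℝ => rowSq R (Wt s) T (node ts) (r : ℕ))
            = fun s => ∑ j : Fin (Rpar R T (node ts)), (Wt s (node ts) r (j : ℕ)) ^ 2 := by
          funext s
          rw [rowSq]
          exact Finset.sum_congr rfl fun j _ => by rw [went_val]
        rw [hfun]
        have hder : HasDerivAt
            (fun s => ∑ j : Fin (Rpar R T (node ts)), (Wt s (node ts) r (j : ℕ)) ^ 2)
            (∑ j : Fin (Rpar R T (node ts)),
              2 * Wt t (node ts) r (j : ℕ)
                * (- dObj D L R T (Wt t) (node ts) (r : ℕ) (j : ℕ))) t := by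
          apply HasDerivAt.fun_sum
          intro j _
          have h := (hflow (node ts) r (j : ℕ) t ht).fun_pow 2
          convert h using 1
          · rfl
          push_cast
          ring
        have heq : (∑ j : Fin (Rpar R T (node ts)),
              2 * Wt t (node ts) r (j : ℕ)
                * (- dObj D L R T (Wt t) (node ts) (r : ℕ) (j : ℕ)))
            = 2 * sigmaLoc R (Wt t) T (node ts) (r : ℕ) *
                tinner D (fun x => - tgrad D L (endT D R (Wt t) T) x)
                  (hatC D R (Wt t) T (node ts) (r : ℕ)) := by
          rw [tinner]
          have hmain := row_main L hL T hnd hbr hν (Wt t) r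
          calc (∑ j : Fin (Rpar R T (node ts)),
                2 * Wt t (node ts) r (j : ℕ)
                  * (- dObj D L R T (Wt t) (node ts) (r : ℕ) (j : ℕ)))
              = (-2) * ∑ j : Fin (Rpar R T (node ts)),
                  Wt t (node ts) r (j : ℕ) * dObj D L R T (Wt t) (node ts) (r : ℕ) (j : ℕ) := by
                rw [Finset.mul_sum]
                exact Finset.sum_congr rfl fun j _ => by ring
            _ = (-2) * (sigmaLoc R (Wt t) T (node ts) (r : ℕ) *
                  ∑ x, tgrad D L (endT D R (Wt t) T) x * hatC D R (Wt t) T (node ts) (r : ℕ) x) := by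
                rw [hmain]
            _ = 2 * sigmaLoc R (Wt t) T (node ts) (r : ℕ) *
                  ∑ x, (- tgrad D L (endT D R (Wt t) T) x) * hatC D R (Wt t) T (node ts) (r : ℕ) x := by
                simp only [neg_mul, Finset.sum_neg_distrib]
                ring
        exact heq ▸ hder
      · -- column part
        have hfun : (fun s : ℝ => colSq R (Wt s) c (r : ℕ))
            = fun s => ∑ i : Fin (R c), (Wt s c i (r : ℕ)) ^ 2 := by
          funext s
          rw [colSq]
        rw [hfun]
        have hder : HasDerivAt (fun s => ∑ i : Fin (R c), (Wt s c i (r : ℕ)) ^ 2)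
            (∑ i : Fin (R c),
              2 * Wt t c i (r : ℕ) * (- dObj D L R T (Wt t) c (i : ℕ) (r : ℕ))) t := by
          apply HasDerivAt.fun_sum
          intro i _
          have h := (hflow c i (r : ℕ) t ht).fun_pow 2
          convert h using 1
          · rfl
          push_cast
          ring
        have heq : (∑ i : Fin (R c),
              2 * Wt t c i (r : ℕ) * (- dObj D L R T (Wt t) c (i : ℕ) (r : ℕ)))
            = 2 * sigmaLoc R (Wt t) T (node ts) (r : ℕ) *
                tinner D (fun x => - tgrad D L (endT D R (Wt t) T) x)
                  (hatC D R (Wt t) T (node ts) (r : ℕ)) := by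
          rw [tinner]
          have hmain := col_main L hL T hnd hbr hν hc (Wt t) (r : ℕ)
          calc (∑ i : Fin (R c),
                2 * Wt t c i (r : ℕ) * (- dObj D L R T (Wt t) c (i : ℕ) (r : ℕ)))
              = (-2) * ∑ i : Fin (R c),
                  Wt t c i (r : ℕ) * dObj D L R T (Wt t) c (i : ℕ) (r : ℕ) := by
                rw [Finset.mul_sum]
                exact Finset.sum_congr rfl fun i _ => by ring
            _ = (-2) * (sigmaLoc R (Wt t) T (node ts) (r : ℕ) *
                  ∑ x, tgrad D L (endT D R (Wt t) T) x * hatC D R (Wt t) T (node ts) (r : ℕ) x) := by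
                rw [hmain]
            _ = 2 * sigmaLoc R (Wt t) T (node ts) (r : ℕ) *
                  ∑ x, (- tgrad D L (endT D R (Wt t) T) x) * hatC D R (Wt t) T (node ts) (r : ℕ) x := by
                simp only [neg_mul, Finset.sum_neg_distrib]
                ring
        exact heq ▸ hder
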